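/- arXiv:1706.00331 — 2 statements merged into one kernel-verified Lean document; each statement's English description precedes it below -/
import Mathlib

section
/- Let φ : closure(B_R) → ℝ be a C² function on the closed disk of radius R in ℝ² with Δφ ≥ −C for some constant C > 0. Then φ(0) ≤ (1/8)·C·R² + (1/(πR²))·∫_{B_R} φ. -/
open Real MeasureTheory Set intervalIntegral Metric

/-- Fubini helper for continuous functions on a compact rectangle. -/
lemma fub_aux {u : ℝ × ℝ → ℝ} {a b c d : ℝ} (hab : a ≤ b) (hcd : c ≤ d)
    (hu : ContinuousOn u (Icc a b ×ˢ Icc c d)) :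
    IntervalIntegrable (fun s => ∫ θ in c..d, u (s, θ)) volume a b ∧
    (∫ s in a..b, ∫ θ in c..d, u (s, θ)) = ∫ θ in c..d, ∫ s in a..b, u (s, θ) := by
  have hmeas : MeasurableSet (Icc a b ×ˢ Icc c d) :=
    (measurableSet_Icc).prod measurableSet_Icc
  have hint : IntegrableOn u (Icc a b ×ˢ Icc c d) :=
    hu.integrableOn_compact (isCompact_Icc.prod isCompact_Icc)
  have hprod : Integrable u ((volume.restrict (Icc a b)).prod (volume.restrict (Icc c d))) := by
    rwa [Measure.prod_restrict]
  have h1 : ∀ s, (∫ θ in c..d, u (s, θ)) = ∫ θ, u (s, θ) ∂(volume.restrict (Icc c d)) := by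
    intro s
    rw [intervalIntegral.integral_of_le hcd, ← integral_Icc_eq_integral_Ioc]
  have h2 : ∀ θ, (∫ s in a..b, u (s, θ)) = ∫ s, u (s, θ) ∂(volume.restrict (Icc a b)) := by
    intro θ
    rw [intervalIntegral.integral_of_le hab, ← integral_Icc_eq_integral_Ioc]
  constructor
  · have := hprod.integral_prod_left
    rw [intervalIntegrable_iff_integrableOn_Icc_of_le hab]
    apply this.congr
    filter_upwards with s
    rw [h1]
  · rw [intervalIntegral.integral_of_le hab, ← integral_Icc_eq_integral_Ioc,
      intervalIntegral.integral_of_le hcd, ← integral_Icc_eq_integral_Ioc]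
    simp_rw [h1, h2]
    exact integral_integral_swap hprod


noncomputable def ee (θ : ℝ) : ℂ := Complex.exp (θ * Complex.I)

lemma abs_ee (θ : ℝ) : ‖ee θ‖ = 1 := by
  simp [ee, Complex.norm_exp_ofReal_mul_I]

lemma polar_symm (p : ℝ × ℝ) :
    Complex.polarCoord.symm p = (p.1 : ℂ) * ee p.2 := by
  rw [Complex.polarCoord_symm_apply, ee, Complex.exp_mul_I]
  simp [Complex.ofReal_cos, Complex.ofReal_sin]

lemma ee_pi : ee π = ee (-π) := by
  simp [ee, Complex.ofReal_neg, neg_mul, Complex.exp_neg, Complex.exp_pi_mul_I, inv_neg]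

-- derivative of t ↦ (t:ℂ) * ee θ
lemma hasDerivAt_radial (θ : ℝ) (t : ℝ) :
    HasDerivAt (fun s : ℝ => (s : ℂ) * ee θ) (ee θ) t := by
  simpa using (Complex.ofRealCLM.hasDerivAt (x := t)).mul_const (ee θ)

-- derivative of θ ↦ (t:ℂ) * ee θ
lemma hasDerivAt_angular (t : ℝ) (θ : ℝ) :
    HasDerivAt (fun ψ : ℝ => (t : ℂ) * ee ψ) (Complex.I * ((t : ℂ) * ee θ)) θ := by
  have h1 : HasDerivAt (fun ψ : ℝ => (ψ : ℂ) * Complex.I) Complex.I θ := by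
    simpa using (Complex.ofRealCLM.hasDerivAt (x := θ)).mul_const Complex.I
  have h2 : HasDerivAt (fun ψ : ℝ => Complex.exp ((ψ : ℂ) * Complex.I))
      (Complex.exp ((θ:ℂ) * Complex.I) * Complex.I) θ := by
    exact h1.cexp
  have := h2.const_mul (t : ℂ)
  simpa [ee, mul_comm, mul_left_comm, mul_assoc] using this

-- rotation invariance of the trace (no symmetry needed)
lemma rotation_trace (H : ℂ →L[ℝ] ℂ →L[ℝ] ℝ) (θ : ℝ) :
    H (ee θ) (ee θ) + H (Complex.I * ee θ) (Complex.I * ee θ)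
      = H 1 1 + H Complex.I Complex.I := by
  have he : ee θ = Real.cos θ • (1:ℂ) + Real.sin θ • Complex.I := by
    rw [ee, Complex.exp_mul_I]
    simp [Complex.real_smul, Complex.ofReal_cos, Complex.ofReal_sin]
  have hie : Complex.I * ee θ = (-Real.sin θ) • (1:ℂ) + Real.cos θ • Complex.I := by
    rw [he]
    simp only [Complex.real_smul, smul_eq_mul]
    push_cast
    have : Complex.I ^ 2 = -1 := Complex.I_sq
    ring_nf
    rw [Complex.I_sq]
    ring
  rw [hie, he]
  simp only [map_add, _root_.map_smul, map_neg, ContinuousLinearMap.add_apply,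
    ContinuousLinearMap.smul_apply, ContinuousLinearMap.neg_apply, smul_eq_mul, neg_smul,
    mul_neg, neg_neg, neg_mul]
  linear_combination (Real.sin_sq_add_cos_sq θ) * ((H 1) 1 + (H Complex.I) Complex.I)

lemma continuous_ee : Continuous ee :=
  Complex.continuous_exp.comp ((Complex.continuous_ofReal).mul continuous_const)

lemma continuousOn_polar_comp {E : Type*} [TopologicalSpace E] {G : ℂ → E} {S : Set ℂ}
    (hG : ContinuousOn G S) {s c d : ℝ}
    (hmap : ∀ t ∈ Icc 0 s, ∀ θ : ℝ, (t : ℂ) * ee θ ∈ S) :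
    ContinuousOn (fun p : ℝ × ℝ => G ((p.1 : ℂ) * ee p.2)) (Icc 0 s ×ˢ Icc c d) := by
  apply hG.comp
  · exact ((Complex.continuous_ofReal.comp continuous_fst).mul
      (continuous_ee.comp continuous_snd)).continuousOn
  · rintro ⟨t, θ⟩ ⟨ht, -⟩
    exact hmap t ht θ

lemma abs_mul_ee (t θ : ℝ) : ‖(t : ℂ) * ee θ‖ = |t| := by
  simp [abs_ee]


noncomputable def lap (φ : ℂ → ℝ) (z : ℂ) : ℝ :=
  fderiv ℝ (fun w => fderiv ℝ φ w 1) z 1 +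
  fderiv ℝ (fun w => fderiv ℝ φ w Complex.I) z Complex.I

lemma lap_eq {φ : ℂ → ℝ} {z : ℂ} (h : DifferentiableAt ℝ (fderiv ℝ φ) z) :
    lap φ z = fderiv ℝ (fderiv ℝ φ) z 1 1 +
      fderiv ℝ (fderiv ℝ φ) z Complex.I Complex.I := by
  unfold lap
  have h1 : ∀ v : ℂ, fderiv ℝ (fun w => fderiv ℝ φ w v) z =
      (fderiv ℝ (fderiv ℝ φ) z).flip v := by
    intro v
    have := fderiv_clm_apply (c := fderiv ℝ φ) (u := fun _ => v) h (differentiableAt_const v)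
    simpa using this
  rw [h1, h1]
  rfl

set_option maxHeartbeats 2000000 in
/-- If `φ` is `C²` on the closed disk of radius `R` in `ℝ² ≅ ℂ` and `Δφ ≥ -C`
for some constant `C > 0`, then `φ(0) ≤ (1/8)·C·R² + (1/(πR²))·∫_{B_R} φ`. -/
theorem stmt2 (R C : ℝ) (hR : 0 < R) (hC : 0 < C) (φ : ℂ → ℝ)
    (hφ : ContDiffOn ℝ 2 φ (Metric.closedBall 0 R))
    (hlap : ∀ z ∈ Metric.ball (0:ℂ) R, -C ≤ lap φ z) :
    φ 0 ≤ (1/8) * C * R ^ 2 + (1 / (π * R ^ 2)) * ∫ z in Metric.ball (0:ℂ) R, φ z := by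
  have hπ := Real.pi_pos
  have hopen : ContDiffOn ℝ 2 φ (ball (0:ℂ) R) := hφ.mono ball_subset_closedBall
  have hFc : ContinuousOn (fderiv ℝ φ) (ball (0:ℂ) R) :=
    hopen.continuousOn_fderiv_of_isOpen isOpen_ball (by norm_num)
  have hF1 : ContDiffOn ℝ 1 (fderiv ℝ φ) (ball (0:ℂ) R) :=
    hopen.fderiv_of_isOpen isOpen_ball (by norm_num)
  have hHc : ContinuousOn (fderiv ℝ (fderiv ℝ φ)) (ball (0:ℂ) R) :=
    hF1.continuousOn_fderiv_of_isOpen isOpen_ball (by norm_num)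
  have hmem : ∀ (t θ : ℝ), |t| < R → (t:ℂ) * ee θ ∈ ball (0:ℂ) R := by
    intro t θ ht
    simp only [mem_ball, Complex.dist_eq, sub_zero, abs_mul_ee]
    exact ht
  have hFd : ∀ z ∈ ball (0:ℂ) R, DifferentiableAt ℝ φ z := fun z hz =>
    (hopen.contDiffAt (isOpen_ball.mem_nhds hz)).differentiableAt (by norm_num)
  have hF2 : ∀ z ∈ ball (0:ℂ) R, DifferentiableAt ℝ (fderiv ℝ φ) z := fun z hz =>
    (hF1.contDiffAt (isOpen_ball.mem_nhds hz)).differentiableAt one_ne_zero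
  set F := fderiv ℝ φ with hF
  set Hs := fderiv ℝ (fderiv ℝ φ) with hHs
  -- the integrand functions
  set P : ℝ × ℝ → ℝ := fun p => F ((p.1:ℂ) * ee p.2) (ee p.2) with hP
  set W : ℝ × ℝ → ℝ := fun p =>
    P p + p.1 * Hs ((p.1:ℂ) * ee p.2) (ee p.2) (ee p.2) with hW
  -- step A : circle average lower bound
  have eeC : ContinuousOn (fun p : ℝ × ℝ => ee p.2) (univ : Set (ℝ × ℝ)) :=
    (continuous_ee.comp continuous_snd).continuousOn
  have hmaps : ∀ {s : ℝ}, s < R → ∀ t ∈ Icc (0:ℝ) s, ∀ θ : ℝ,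
      (t:ℂ) * ee θ ∈ ball (0:ℂ) R := by
    intro s hs t ht θ
    exact hmem t θ (by rw [abs_of_nonneg ht.1]; linarith [ht.2])
  have hPcont : ∀ {s : ℝ}, s < R → ContinuousOn P (Icc 0 s ×ˢ Icc (-π) π) := by
    intro s hs
    exact (continuousOn_polar_comp hFc (hmaps hs)).clm_apply
      ((continuous_ee.comp continuous_snd).continuousOn)
  have hWcont : ∀ {s : ℝ}, s < R → ContinuousOn W (Icc 0 s ×ˢ Icc (-π) π) := by
    intro s hs
    apply (hPcont hs).add
    apply (continuous_fst.continuousOn).mul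
    exact ((continuousOn_polar_comp hHc (hmaps hs)).clm_apply
      ((continuous_ee.comp continuous_snd).continuousOn)).clm_apply
      ((continuous_ee.comp continuous_snd).continuousOn)
  have hslice : ∀ {u : ℝ × ℝ → ℝ} {s : ℝ}, ContinuousOn u (Icc 0 s ×ˢ Icc (-π) π) →
      ∀ {θ : ℝ}, θ ∈ Icc (-π) π → ContinuousOn (fun t => u (t, θ)) (Icc 0 s) := by
    intro u s hu θ hθ
    exact hu.comp (Continuous.continuousOn (continuous_id.prodMk continuous_const)) (fun t ht => ⟨ht, hθ⟩)
  -- angular lower bound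
  have hA3 : ∀ t, t ∈ Ioo (0:ℝ) R → -(2*π*C*t) ≤ ∫ θ in (-π)..π, W (t, θ) := by
    rintro t ⟨ht0, htR⟩
    set z : ℝ → ℂ := fun ψ => (t:ℂ) * ee ψ with hz
    have hzmem : ∀ ψ, z ψ ∈ ball (0:ℂ) R := fun ψ => hmem t ψ (by rwa [abs_of_pos ht0])
    have hzc : Continuous z := continuous_const.mul continuous_ee
    set k : ℝ → ℝ := fun ψ => F (z ψ) (Complex.I * z ψ) with hk
    set k' : ℝ → ℝ := fun ψ =>
      Hs (z ψ) (Complex.I * z ψ) (Complex.I * z ψ) - F (z ψ) (z ψ) with hk'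
    have hkder : ∀ ψ, HasDerivAt k (k' ψ) ψ := by
      intro ψ
      have hc : HasDerivAt (fun ψ' => F (z ψ')) (Hs (z ψ) (Complex.I * z ψ)) ψ :=
        (hF2 _ (hzmem ψ)).hasFDerivAt.comp_hasDerivAt ψ (hasDerivAt_angular t ψ)
      have hu : HasDerivAt (fun ψ' => Complex.I * z ψ')
          (Complex.I * (Complex.I * z ψ)) ψ :=
        (hasDerivAt_angular t ψ).const_mul Complex.I
      have h2 := hc.clm_apply hu
      have h3 : Complex.I * (Complex.I * z ψ) = -(z ψ) := by
        rw [← mul_assoc, Complex.I_mul_I, neg_one_mul]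
      rw [h3] at h2
      simpa [hk, hk', map_neg, sub_eq_add_neg] using h2
    have hHz : ContinuousOn (fun ψ : ℝ => Hs (z ψ)) (Icc (-π) π) :=
      hHc.comp hzc.continuousOn (fun ψ _ => hzmem ψ)
    have hFz : ContinuousOn (fun ψ : ℝ => F (z ψ)) (Icc (-π) π) :=
      hFc.comp hzc.continuousOn (fun ψ _ => hzmem ψ)
    have hIz : Continuous (fun ψ : ℝ => Complex.I * z ψ) := continuous_const.mul hzc
    have hk'c : ContinuousOn k' (Icc (-π) π) :=
      ((hHz.clm_apply hIz.continuousOn).clm_apply hIz.continuousOn).sub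
        (hFz.clm_apply hzc.continuousOn)
    have hpile : -π ≤ π := by linarith
    have hk'int : IntervalIntegrable k' volume (-π) π := by
      apply MeasureTheory.IntegrableOn.intervalIntegrable
      rw [uIcc_of_le hpile]
      exact hk'c.integrableOn_compact isCompact_Icc
    have hk0 : (∫ ψ in (-π)..π, k' ψ) = 0 := by
      rw [intervalIntegral.integral_eq_sub_of_hasDerivAt (fun ψ _ => hkder ψ) hk'int]
      have : z π = z (-π) := by rw [hz]; simp only [ee_pi]
      simp only [hk, this, sub_self]
    have hlapc : ContinuousOn (fun θ => lap φ (z θ)) (Icc (-π) π) := by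
      apply ContinuousOn.congr
        ((hHz.clm_apply continuousOn_const).clm_apply continuousOn_const |>.add
          ((hHz.clm_apply continuousOn_const).clm_apply continuousOn_const))
      intro θ _
      exact lap_eq (hF2 _ (hzmem θ))
    have hlapint : IntervalIntegrable (fun θ => lap φ (z θ)) volume (-π) π := by
      apply MeasureTheory.IntegrableOn.intervalIntegrable
      rw [uIcc_of_le hpile]
      exact hlapc.integrableOn_compact isCompact_Icc
    have hlaplb : -(2*π*C) ≤ ∫ θ in (-π)..π, lap φ (z θ) := by
      have := intervalIntegral.integral_mono_on hpile
        (_root_.intervalIntegrable_const (c := -C)) hlapint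
        (fun θ _ => hlap (z θ) (hzmem θ))
      rw [intervalIntegral.integral_const, smul_eq_mul] at this
      linarith
    have ht' : t ≠ 0 := ne_of_gt ht0
    have hident : ∀ θ, W (t, θ) = t * lap φ (z θ) - (1/t) * k' θ := by
      intro θ
      have e1 : lap φ (z θ) = Hs (z θ) 1 1 + Hs (z θ) Complex.I Complex.I :=
        lap_eq (hF2 _ (hzmem θ))
      have e2 := rotation_trace (Hs (z θ)) θ
      have e3 : Hs (z θ) (Complex.I * z θ) (Complex.I * z θ)
          = t^2 * Hs (z θ) (Complex.I * ee θ) (Complex.I * ee θ) := by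
        have h4 : Complex.I * z θ = t • (Complex.I * ee θ) := by
          rw [hz, Complex.real_smul]; ring
        simp only [h4, _root_.map_smul, ContinuousLinearMap.smul_apply, smul_eq_mul]
        ring
      have e4 : F (z θ) (z θ) = t * F (z θ) (ee θ) := by
        have h4 : z θ = t • ee θ := by rw [hz, Complex.real_smul]
        nth_rewrite 2 [h4]
        rw [_root_.map_smul, smul_eq_mul]
      simp only [hW, hP, hk']
      rw [e1, ← e2, e3, e4]
      field_simp
      ring
    have hWint_eq : (∫ θ in (-π)..π, W (t, θ))
        = t * (∫ θ in (-π)..π, lap φ (z θ)) - (1/t) * ∫ θ in (-π)..π, k' θ := by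
      rw [← intervalIntegral.integral_const_mul, ← intervalIntegral.integral_const_mul,
        ← intervalIntegral.integral_sub (hlapint.const_mul t) (hk'int.const_mul (1/t))]
      exact intervalIntegral.integral_congr (fun θ _ => hident θ)
    rw [hWint_eq, hk0, mul_zero, sub_zero]
    calc -(2*π*C*t) = t * (-(2*π*C)) := by ring
      _ ≤ t * ∫ θ in (-π)..π, lap φ (z θ) := mul_le_mul_of_nonneg_left hlaplb ht0.le
  -- radial lower bound for circle derivative
  have hne : ∀ (c : ℝ) (a b : ℝ), ∀ᵐ s ∂(volume.restrict (Icc a b)), s ≠ c := by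
    intro c a b
    apply ae_restrict_of_ae
    rw [ae_iff]
    simpa [not_not, Set.setOf_eq_eq_singleton] using Real.volume_singleton
  have hq : ∀ r, r ∈ Ioo (0:ℝ) R → ∀ s, s ∈ Ioc (0:ℝ) r →
      -(π*C*s) ≤ ∫ θ in (-π)..π, P (s, θ) := by
    rintro r ⟨hr0, hrR⟩ s ⟨hs0, hsr⟩
    have hsR : s < R := lt_of_le_of_lt hsr hrR
    have hfub := fub_aux hs0.le (by linarith : -π ≤ π) (hWcont hsR)
    have hFTC2 : ∀ θ ∈ Icc (-π) π, s * P (s, θ) = ∫ t' in (0:ℝ)..s, W (t', θ) := by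
      intro θ hθ
      have hder : ∀ t' ∈ uIcc (0:ℝ) s,
          HasDerivAt (fun u : ℝ => u * P (u, θ)) (W (t', θ)) t' := by
        intro t' ht'
        rw [uIcc_of_le hs0.le] at ht'
        have htR' : |t'| < R := by rw [abs_of_nonneg ht'.1]; linarith [ht'.2]
        have hc : HasDerivAt (fun u : ℝ => F ((u:ℂ) * ee θ))
            (Hs ((t':ℂ)*ee θ) (ee θ)) t' :=
          (hF2 _ (hmem t' θ htR')).hasFDerivAt.comp_hasDerivAt t' (hasDerivAt_radial θ t')
        have hc2 : HasDerivAt (fun u : ℝ => P (u, θ))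
            (Hs ((t':ℂ)*ee θ) (ee θ) (ee θ)) t' := by
          simpa using hc.clm_apply (hasDerivAt_const t' (ee θ))
        have h5 := (hasDerivAt_id' t').mul hc2
        simpa [hW, hP, one_mul, mul_comm, Pi.mul_def] using h5
      have hint : IntervalIntegrable (fun t' => W (t', θ)) volume 0 s := by
        apply MeasureTheory.IntegrableOn.intervalIntegrable
        rw [uIcc_of_le hs0.le]
        exact (hslice (hWcont hsR) hθ).integrableOn_compact isCompact_Icc
      have h6 := intervalIntegral.integral_eq_sub_of_hasDerivAt hder hint
      rw [h6]
      simp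
    have step : s * (∫ θ in (-π)..π, P (s, θ))
        = ∫ t' in (0:ℝ)..s, ∫ θ in (-π)..π, W (t', θ) := by
      rw [← intervalIntegral.integral_const_mul]
      rw [intervalIntegral.integral_congr (g := fun θ => ∫ t' in (0:ℝ)..s, W (t', θ))
        (fun θ hθ => hFTC2 θ (by rwa [uIcc_of_le (by linarith : -π ≤ π)] at hθ))]
      exact hfub.2.symm
    have hlow : -(π*C*s^2) ≤ ∫ t' in (0:ℝ)..s, ∫ θ in (-π)..π, W (t', θ) := by
      have hLint : IntervalIntegrable (fun t' : ℝ => -(2*π*C*t')) volume 0 s :=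
        ((continuous_const.mul continuous_id).neg).intervalIntegrable _ _
      have hmono := intervalIntegral.integral_mono_ae_restrict hs0.le hLint hfub.1 ?_
      · refine le_trans (le_of_eq ?_) hmono
        rw [intervalIntegral.integral_neg, intervalIntegral.integral_const_mul, integral_id]
        ring
      · filter_upwards [ae_restrict_mem measurableSet_Icc, hne 0 0 s] with t' ht' h0
        exact hA3 t' ⟨ht'.1.lt_of_ne' h0, lt_of_le_of_lt ht'.2 hsR⟩
    nlinarith [step, hlow, mul_pos hs0 hs0]
  have hcirc : ∀ r ∈ Ioo (0:ℝ) R,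
      2*π*(φ 0) - π*C*r^2/2 ≤ ∫ θ in (-π)..π, φ ((r:ℂ) * ee θ) := by
    rintro r ⟨hr0, hrR⟩
    have hfubr := fub_aux hr0.le (by linarith : -π ≤ π) (hPcont hrR)
    have hFTC1 : ∀ θ ∈ Icc (-π) π,
        φ ((r:ℂ) * ee θ) - φ 0 = ∫ s in (0:ℝ)..r, P (s, θ) := by
      intro θ hθ
      have hder : ∀ s ∈ uIcc (0:ℝ) r,
          HasDerivAt (fun u : ℝ => φ ((u:ℂ) * ee θ)) (P (s, θ)) s := by
        intro s hs
        rw [uIcc_of_le hr0.le] at hs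
        have hsR' : |s| < R := by rw [abs_of_nonneg hs.1]; linarith [hs.2]
        have h7 := (hFd _ (hmem s θ hsR')).hasFDerivAt.comp_hasDerivAt s
          (hasDerivAt_radial θ s)
        simpa [hP, Function.comp_def] using h7
      have hint : IntervalIntegrable (fun s => P (s, θ)) volume 0 r := by
        apply MeasureTheory.IntegrableOn.intervalIntegrable
        rw [uIcc_of_le hr0.le]
        exact (hslice (hPcont hrR) hθ).integrableOn_compact isCompact_Icc
      rw [intervalIntegral.integral_eq_sub_of_hasDerivAt hder hint]
      norm_num
    have hphiint : IntervalIntegrable (fun θ => φ ((r:ℂ) * ee θ)) volume (-π) π := by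
      apply MeasureTheory.IntegrableOn.intervalIntegrable
      rw [uIcc_of_le (by linarith : -π ≤ π)]
      apply ContinuousOn.integrableOn_compact isCompact_Icc
      apply hφ.continuousOn.comp (continuous_const.mul continuous_ee).continuousOn
      intro θ _
      simp only [mem_closedBall, Complex.dist_eq, sub_zero, Pi.mul_apply, abs_mul_ee]
      rw [abs_of_nonneg hr0.le]
      exact hrR.le
    have heq : (∫ θ in (-π)..π, (φ ((r:ℂ) * ee θ) - φ 0))
        = ∫ s in (0:ℝ)..r, ∫ θ in (-π)..π, P (s, θ) := by
      rw [intervalIntegral.integral_congr (g := fun θ => ∫ s in (0:ℝ)..r, P (s, θ))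
        (fun θ hθ => hFTC1 θ (by rwa [uIcc_of_le (by linarith : -π ≤ π)] at hθ))]
      exact hfubr.2.symm
    have hlow : -(π*C*r^2/2) ≤ ∫ s in (0:ℝ)..r, ∫ θ in (-π)..π, P (s, θ) := by
      have hLint : IntervalIntegrable (fun s : ℝ => -(π*C*s)) volume 0 r :=
        ((continuous_const.mul continuous_id).neg).intervalIntegrable _ _
      have hmono := intervalIntegral.integral_mono_ae_restrict hr0.le hLint hfubr.1 ?_
      · refine le_trans (le_of_eq ?_) hmono
        rw [intervalIntegral.integral_neg, intervalIntegral.integral_const_mul, integral_id]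
        ring
      · filter_upwards [ae_restrict_mem measurableSet_Icc, hne 0 0 r] with s hs h0
        exact hq r ⟨hr0, hrR⟩ s ⟨hs.1.lt_of_ne' h0, hs.2⟩
    have hsplit : (∫ θ in (-π)..π, (φ ((r:ℂ) * ee θ) - φ 0))
        = (∫ θ in (-π)..π, φ ((r:ℂ) * ee θ)) - 2*π*(φ 0) := by
      rw [intervalIntegral.integral_sub hphiint (_root_.intervalIntegrable_const),
        intervalIntegral.integral_const, smul_eq_mul]
      ring
    linarith [hlow, heq, hsplit]
  -- step B : polar coordinates
  have hpolar : (∫ z in ball (0:ℂ) R, φ z)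
      = ∫ s in (0:ℝ)..R, ∫ θ in (-π)..π, s * φ ((s:ℂ) * ee θ) := by
    have hSm : MeasurableSet (Ioo (0:ℝ) R ×ˢ Ioo (-π) π) :=
      measurableSet_Ioo.prod measurableSet_Ioo
    have hg : ContinuousOn (fun p : ℝ × ℝ => p.1 * φ ((p.1:ℂ) * ee p.2))
        (Icc 0 R ×ˢ Icc (-π) π) := by
      apply (continuous_fst.continuousOn).mul
      apply continuousOn_polar_comp hφ.continuousOn
      intro t ht θ
      simp only [mem_closedBall, Complex.dist_eq, sub_zero, abs_mul_ee]
      rw [abs_of_nonneg ht.1]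
      exact ht.2
    have hgi : IntegrableOn (fun p : ℝ × ℝ => p.1 * φ ((p.1:ℂ) * ee p.2))
        (Ioo (0:ℝ) R ×ˢ Ioo (-π) π) := by
      apply (hg.integrableOn_compact (isCompact_Icc.prod isCompact_Icc)).mono_set
      exact Set.prod_mono Ioo_subset_Icc_self Ioo_subset_Icc_self
    have step1 : (∫ z in ball (0:ℂ) R, φ z)
        = ∫ p in polarCoord.target, p.1 • (Set.indicator (ball (0:ℂ) R) φ)
            (Complex.polarCoord.symm p) := by
      rw [Complex.integral_comp_polarCoord_symm, MeasureTheory.integral_indicator measurableSet_ball]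
    have step2 : (∫ p in polarCoord.target, p.1 • (Set.indicator (ball (0:ℂ) R) φ)
            (Complex.polarCoord.symm p))
        = ∫ p in Ioo (0:ℝ) R ×ˢ Ioo (-π) π, p.1 * φ ((p.1:ℂ) * ee p.2) := by
      rw [show polarCoord.target = Ioi (0:ℝ) ×ˢ Ioo (-π) π from rfl]
      rw [show (∫ p in Ioi (0:ℝ) ×ˢ Ioo (-π) π, p.1 • (Set.indicator (ball (0:ℂ) R) φ)
            (Complex.polarCoord.symm p))
          = ∫ p in Ioi (0:ℝ) ×ˢ Ioo (-π) π,
            (Ioo (0:ℝ) R ×ˢ Ioo (-π) π).indicator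
              (fun p : ℝ × ℝ => p.1 * φ ((p.1:ℂ) * ee p.2)) p from ?_]
      · rw [MeasureTheory.integral_indicator hSm, Measure.restrict_restrict hSm,
          inter_eq_self_of_subset_left (Set.prod_mono Ioo_subset_Ioi_self (subset_refl _))]
      · apply setIntegral_congr_fun (measurableSet_Ioi.prod measurableSet_Ioo)
        rintro ⟨t, θ⟩ ⟨ht, hθ⟩
        simp only [polar_symm, smul_eq_mul]
        by_cases htR : t < R
        · rw [Set.indicator_of_mem (hmem t θ (by rwa [abs_of_pos ht])),
            Set.indicator_of_mem (by exact ⟨⟨ht, htR⟩, hθ⟩)]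
        · rw [Set.indicator_of_notMem, Set.indicator_of_notMem, mul_zero]
          · rintro ⟨⟨-, h2⟩, -⟩; exact htR h2
          · intro hmem'
            rw [mem_ball, Complex.dist_eq, sub_zero, abs_mul_ee,
              abs_of_pos ht] at hmem'
            exact htR hmem'
    have step3 : (∫ p in Ioo (0:ℝ) R ×ˢ Ioo (-π) π, p.1 * φ ((p.1:ℂ) * ee p.2))
        = ∫ s in (0:ℝ)..R, ∫ θ in (-π)..π, s * φ ((s:ℂ) * ee θ) := by
      rw [Measure.volume_eq_prod, ← Measure.prod_restrict]
      rw [integral_prod _ (by rwa [Measure.prod_restrict, ← Measure.volume_eq_prod])]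
      rw [intervalIntegral.integral_of_le hR.le, integral_Ioc_eq_integral_Ioo]
      apply setIntegral_congr_fun measurableSet_Ioo
      intro s _
      dsimp only
      rw [intervalIntegral.integral_of_le (by linarith : -π ≤ π), integral_Ioc_eq_integral_Ioo]
    rw [step1, step2, step3]
  -- step C : outer integration
  have hgR : ContinuousOn (fun p : ℝ × ℝ => p.1 * φ ((p.1:ℂ) * ee p.2))
      (Icc 0 R ×ˢ Icc (-π) π) := by
    apply (continuous_fst.continuousOn).mul
    apply continuousOn_polar_comp hφ.continuousOn
    intro t ht θ
    simp only [mem_closedBall, Complex.dist_eq, sub_zero, abs_mul_ee]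
    rw [abs_of_nonneg ht.1]
    exact ht.2
  have hne : ∀ (c : ℝ) (a b : ℝ), ∀ᵐ s ∂(volume.restrict (Icc a b)), s ≠ c := by
    intro c a b
    apply ae_restrict_of_ae
    rw [ae_iff]
    simpa [not_not, Set.setOf_eq_eq_singleton] using Real.volume_singleton
  have houter : π*R^2*(φ 0) - π*C*R^4/8 ≤ ∫ z in ball (0:ℂ) R, φ z := by
    rw [hpolar]
    have hui : IntervalIntegrable (fun s => ∫ θ in (-π)..π, s * φ ((s:ℂ) * ee θ))
        volume 0 R := (fub_aux hR.le (by linarith) hgR).1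
    have hLi : IntervalIntegrable (fun s : ℝ => 2*π*(φ 0)*s - π*C/2*s^3) volume 0 R :=
      ((continuous_const.mul continuous_id).sub
        (continuous_const.mul (continuous_pow 3))).intervalIntegrable _ _
    have hcomp : (∫ s in (0:ℝ)..R, (2*π*(φ 0)*s - π*C/2*s^3))
        = π*R^2*(φ 0) - π*C*R^4/8 := by
      rw [intervalIntegral.integral_sub
        ((intervalIntegral.intervalIntegrable_id).const_mul _)
        ((intervalIntegral.intervalIntegrable_pow 3).const_mul _)]
      rw [intervalIntegral.integral_const_mul, intervalIntegral.integral_const_mul,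
        integral_id, integral_pow]
      ring
    have hmono : (∫ s in (0:ℝ)..R, (2*π*(φ 0)*s - π*C/2*s^3))
        ≤ ∫ s in (0:ℝ)..R, ∫ θ in (-π)..π, s * φ ((s:ℂ) * ee θ) := by
      apply intervalIntegral.integral_mono_ae_restrict hR.le hLi hui
      filter_upwards [ae_restrict_mem measurableSet_Icc, hne 0 0 R, hne R 0 R]
        with s hs h0 hsR
      have hs' : s ∈ Ioo (0:ℝ) R := ⟨hs.1.lt_of_ne' h0, hs.2.lt_of_ne hsR⟩
      calc 2*π*(φ 0)*s - π*C/2*s^3 = s * (2*π*(φ 0) - π*C*s^2/2) := by ring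
        _ ≤ s * ∫ θ in (-π)..π, φ ((s:ℂ) * ee θ) :=
            mul_le_mul_of_nonneg_left (hcirc s hs') hs.1
        _ = ∫ θ in (-π)..π, s * φ ((s:ℂ) * ee θ) :=
            (intervalIntegral.integral_const_mul _ _).symm
    linarith [hcomp ▸ hmono]
  -- final arithmetic
  have hR2 : 0 < π * R ^ 2 := by positivity
  have key : φ 0 ≤ (π*C*R^4/8 + ∫ z in ball (0:ℂ) R, φ z) / (π * R^2) := by
    rw [le_div_iff₀ hR2, mul_comm]
    linarith
  refine key.trans (le_of_eq ?_)
  field_simp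
end

section
/- Let u : B_R \ {0} → ℂ be a holomorphic function on the punctured disk with finite energy E(u) = (1/2)∫_{B_R \ {0}} |du|² < ∞ (equivalently ∫ |u'(z)|² dA < ∞). Then u extends to a holomorphic function on B_R. -/
open MeasureTheory
open Metric Set Filter intervalIntegral Real Topology


lemma circleMap_eq_polar (c : ℂ) (ρ θ : ℝ) :
    c + Complex.polarCoord.symm (ρ, θ) = circleMap c ρ θ := by
  simp only [circleMap, Complex.polarCoord_symm_apply, Complex.exp_mul_I]
  push_cast
  ring

lemma circle_submean {f : ℂ → ℂ} {c : ℂ} {r ρ : ℝ} (hρ : 0 < ρ) (hρr : ρ < r)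
    (hf : DifferentiableOn ℂ f (ball c r)) :
    2 * π * ‖f c‖ ^ 2 ≤ ∫ θ in (0:ℝ)..(2*π), ‖f (circleMap c ρ θ)‖ ^ 2 := by
  set g : ℂ → ℂ := fun z => f z * f z with hg
  have hball : closedBall c ρ ⊆ ball c r := closedBall_subset_ball hρr
  have hgd : DifferentiableOn ℂ g (ball c r) := hf.mul hf
  have hcau := Complex.circleIntegral_sub_center_inv_smul_of_differentiable_on_off_countable
    (f := g) (c := c) (s := (∅ : Set ℂ)) hρ Set.countable_empty
    (hgd.continuousOn.mono hball)
    (fun z hz => (hgd.differentiableAt (isOpen_ball.mem_nhds (hball (ball_subset_closedBall hz.1)))))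
  have hnorm : ‖(2 * (π:ℂ) * Complex.I) • g c‖ = 2 * π * ‖f c‖ ^ 2 := by
    simp [norm_smul, hg, Real.pi_nonneg, abs_of_nonneg, sq]
  rw [← hcau] at hnorm
  rw [← hnorm]
  calc ‖∮ (z : ℂ) in C(c, ρ), (z - c)⁻¹ • g z‖
      ≤ ∫ θ in (0:ℝ)..(2*π), ‖deriv (circleMap c ρ) θ • ((circleMap c ρ θ - c)⁻¹ • g (circleMap c ρ θ))‖ := by
        rw [circleIntegral]
        exact intervalIntegral.norm_integral_le_integral_norm (by positivity)
    _ = ∫ θ in (0:ℝ)..(2*π), ‖f (circleMap c ρ θ)‖ ^ 2 := by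
        refine intervalIntegral.integral_congr fun θ _ => ?_
        rw [deriv_circleMap, circleMap_sub_center]
        rw [norm_smul, norm_smul, norm_inv]
        simp [norm_circleMap_zero, abs_of_pos hρ, hg, sq]
        field_simp

lemma area_submean {f : ℂ → ℂ} {c : ℂ} {r s : ℝ} (hs : 0 < s) (hsr : s < r)
    (hf : DifferentiableOn ℂ f (ball c r))
    (hI : IntegrableOn (fun z => ‖f z‖ ^ 2) (ball c r)) :
    π * s ^ 2 * ‖f c‖ ^ 2 ≤ ∫ z in ball c r, ‖f z‖ ^ 2 := by
  have hcs : ∀ ρ : ℝ, 0 < ρ → ρ < r →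
      2 * π * ‖f c‖ ^ 2 ≤ ∫ θ in (0:ℝ)..(2*π), ‖f (circleMap c ρ θ)‖ ^ 2 :=
    fun ρ h1 h2 => circle_submean h1 h2 hf
  have key : ∀ a ∈ Set.Ioo (0:ℝ) s,
      π * (s ^ 2 - a ^ 2) * ‖f c‖ ^ 2 ≤ ∫ z in ball c r, ‖f z‖ ^ 2 := by
    intro a ha
    obtain ⟨ha0, has⟩ := ha
    set G : ℝ × ℝ → ℝ := fun p => p.1 * ‖f (circleMap c p.1 p.2)‖ ^ 2 with hG
    set Az : Set ℂ := {z | dist z c ∈ Set.Ioc a s} with hAz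
    have hAzm : MeasurableSet Az := by
      have : Az = (fun z => dist z c) ⁻¹' Set.Ioc a s := rfl
      rw [this]
      exact measurableSet_Ioc.preimage (by fun_prop)
    have hAzsub : Az ⊆ ball c r := fun z hz => by
      rw [mem_ball]; exact lt_of_le_of_lt hz.2 hsr
    -- rect
    set rect : Set (ℝ × ℝ) := Set.Ioc a s ×ˢ Set.Ioo (-π) π with hrect
    have hrectm : MeasurableSet rect := measurableSet_Ioc.prod measurableSet_Ioo
    -- continuity and integrability of G on rect
    have hGcont : ContinuousOn G (Set.Icc a s ×ˢ Set.Icc (-π) π) := by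
      apply ContinuousOn.mul (by fun_prop)
      apply ContinuousOn.pow
      apply ContinuousOn.norm
      apply hf.continuousOn.comp
      · exact Continuous.continuousOn
          (show Continuous fun p : ℝ × ℝ => c + ↑p.1 * Complex.exp (↑p.2 * Complex.I) by fun_prop)
      · intro p hp
        have hsp := circleMap_mem_sphere' c p.1 p.2
        rw [mem_sphere] at hsp
        rw [mem_ball, hsp]
        calc |p.1| ≤ s := abs_le.2 ⟨le_trans (by linarith) hp.1.1, hp.1.2⟩
          _ < r := hsr
    have hGint : IntegrableOn G rect := by
      apply (hGcont.integrableOn_compact (isCompact_Icc.prod isCompact_Icc)).mono_set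
      exact Set.prod_mono Set.Ioc_subset_Icc_self Set.Ioo_subset_Icc_self
    -- chain
    have step1 : ∫ p in rect, G p = ∫ z in Az, ‖f z‖ ^ 2 := by
      have e1 : ∫ z in Az, ‖f z‖ ^ 2 = ∫ z, Az.indicator (fun z => ‖f z‖ ^ 2) z := by
        exact (MeasureTheory.integral_indicator hAzm).symm
      have e2 : ∫ z, Az.indicator (fun z => ‖f z‖ ^ 2) z
          = ∫ w, Az.indicator (fun z => ‖f z‖ ^ 2) (c + w) := by
        rw [integral_add_left_eq_self]
      have e3 : ∫ w, Az.indicator (fun z => ‖f z‖ ^ 2) (c + w)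
          = ∫ p in polarCoord.target,
              p.1 • Az.indicator (fun z => ‖f z‖ ^ 2) (c + Complex.polarCoord.symm p) := by
        rw [Complex.integral_comp_polarCoord_symm (fun w => Az.indicator (fun z => ‖f z‖ ^ 2) (c + w))]
      have e4 : ∫ p in polarCoord.target,
              p.1 • Az.indicator (fun z => ‖f z‖ ^ 2) (c + Complex.polarCoord.symm p)
          = ∫ p in polarCoord.target, rect.indicator G p := by
        apply setIntegral_congr_fun (polarCoord.open_target.measurableSet)
        intro p hp
        rw [polarCoord_target] at hp
        dsimp only
        have hp1 : (0:ℝ) < p.1 := hp.1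
        have habs : dist (c + Complex.polarCoord.symm p) c = p.1 := by
          rw [Complex.dist_eq, add_sub_cancel_left, Complex.norm_polarCoord_symm, abs_of_pos hp1]
        by_cases hmem : p.1 ∈ Set.Ioc a s
        · rw [Set.indicator_of_mem
              (show c + Complex.polarCoord.symm p ∈ Az by
                simp only [hAz, Set.mem_setOf_eq, habs]; exact hmem),
            Set.indicator_of_mem
              (show p ∈ rect from Set.mem_prod.mpr ⟨hmem, hp.2⟩)]
          have hcm : circleMap c p.1 p.2 = c + Complex.polarCoord.symm p := by
            rw [← circleMap_eq_polar c p.1 p.2]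
          simp only [hG, smul_eq_mul, hcm]
        · rw [Set.indicator_of_notMem
              (show c + Complex.polarCoord.symm p ∉ Az by
                simp only [hAz, Set.mem_setOf_eq, habs]; exact hmem),
            Set.indicator_of_notMem (fun hc => hmem hc.1), smul_zero]
      have e5 : ∫ p in polarCoord.target, rect.indicator G p = ∫ p in rect, G p := by
        rw [setIntegral_indicator hrectm, Set.inter_eq_self_of_subset_right]
        rw [hrect, polarCoord_target]
        exact Set.prod_mono (fun x hx => lt_trans ha0 hx.1) subset_rfl
      rw [e1, e2, e3, e4, e5]
    have step2 : ∫ z in Az, ‖f z‖ ^ 2 ≤ ∫ z in ball c r, ‖f z‖ ^ 2 := by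
      apply setIntegral_mono_set hI
      · exact Filter.Eventually.of_forall (fun z => by positivity)
      · exact Filter.Eventually.of_forall hAzsub
    -- Fubini
    have hfub : ∫ p in rect, G p = ∫ ρ in Set.Ioc a s, ∫ θ in Set.Ioo (-π) π, G (ρ, θ) := by
      rw [hrect, Measure.volume_eq_prod]
      exact setIntegral_prod G (by rwa [← Measure.volume_eq_prod])
    have hinner : ∀ ρ ∈ Set.Ioc a s, 2 * π * ‖f c‖ ^ 2 * ρ ≤ ∫ θ in Set.Ioo (-π) π, G (ρ, θ) := by
      intro ρ hρ
      have hρ0 : 0 < ρ := lt_trans ha0 hρ.1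
      have hmul : ∫ θ in Set.Ioo (-π) π, G (ρ, θ)
          = ρ * ∫ θ in Set.Ioo (-π) π, ‖f (circleMap c ρ θ)‖ ^ 2 := by
        simp only [hG]
        exact MeasureTheory.integral_const_mul ρ _
      rw [hmul]
      have hper : Function.Periodic (fun θ => ‖f (circleMap c ρ θ)‖ ^ 2) (2 * π) :=
        fun θ => by simp [periodic_circleMap c ρ θ]
      have e6 : ∫ θ in Set.Ioo (-π) π, ‖f (circleMap c ρ θ)‖ ^ 2
          = ∫ θ in (0:ℝ)..(2*π), ‖f (circleMap c ρ θ)‖ ^ 2 := by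
        rw [← MeasureTheory.integral_Ioc_eq_integral_Ioo,
          ← intervalIntegral.integral_of_le (by linarith [Real.pi_pos] : (-π:ℝ) ≤ π)]
        have hpp := hper.intervalIntegral_add_eq (-π) 0
        rw [show -π + 2*π = π by ring] at hpp
        rw [hpp, zero_add]
      rw [e6]
      calc 2*π*‖f c‖^2 * ρ = ρ * (2*π*‖f c‖^2) := by ring
        _ ≤ ρ * ∫ θ in (0:ℝ)..(2*π), ‖f (circleMap c ρ θ)‖^2 :=
          mul_le_mul_of_nonneg_left (hcs ρ hρ0 (lt_of_le_of_lt hρ.2 hsr)) hρ0.le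
    have hmarg : IntegrableOn (fun ρ => ∫ θ in Set.Ioo (-π) π, G (ρ, θ)) (Set.Ioc a s) := by
      have h1 : Integrable G ((volume.restrict (Set.Ioc a s)).prod (volume.restrict (Set.Ioo (-π) π))) := by
        rw [Measure.prod_restrict, ← Measure.volume_eq_prod]; exact hGint
      exact h1.integral_prod_left
    have houter : ∫ ρ in Set.Ioc a s, 2*π*‖f c‖^2 * ρ
        ≤ ∫ ρ in Set.Ioc a s, ∫ θ in Set.Ioo (-π) π, G (ρ, θ) := by
      refine setIntegral_mono_on ?_ hmarg measurableSet_Ioc hinner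
      exact (continuous_const.mul continuous_id).integrableOn_Ioc
    have hval : ∫ ρ in Set.Ioc a s, 2*π*‖f c‖^2 * ρ = π * (s^2 - a^2) * ‖f c‖^2 := by
      rw [← intervalIntegral.integral_of_le has.le]
      rw [intervalIntegral.integral_const_mul, integral_id]
      ring
    calc π * (s^2 - a^2) * ‖f c‖^2 = ∫ ρ in Set.Ioc a s, 2*π*‖f c‖^2 * ρ := hval.symm
      _ ≤ ∫ ρ in Set.Ioc a s, ∫ θ in Set.Ioo (-π) π, G (ρ, θ) := houter
      _ = ∫ p in rect, G p := hfub.symm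
      _ = ∫ z in Az, ‖f z‖^2 := step1
      _ ≤ _ := step2
  have hlim : Tendsto (fun a : ℝ => π * (s ^ 2 - a ^ 2) * ‖f c‖ ^ 2) (𝓝[>] 0)
      (𝓝 (π * s ^ 2 * ‖f c‖ ^ 2)) := by
    have hcont : Continuous fun a : ℝ => π * (s ^ 2 - a ^ 2) * ‖f c‖ ^ 2 := by fun_prop
    have h0 := hcont.tendsto 0
    norm_num at h0
    exact h0.mono_left nhdsWithin_le_nhds
  exact le_of_tendsto hlim
    (Filter.eventually_of_mem (Ioo_mem_nhdsGT (hs)) key)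


/-- **Removal of singularity, integrable model case.**
A holomorphic function `u` on the punctured disk `B_R \ {0}` with finite energy
`(1/2)∫ |du|² = ∫ |u'|² dA < ∞` extends to a holomorphic function on `B_R`. -/
theorem stmt12 (R : ℝ) (hR : 0 < R) (u : ℂ → ℂ)
    (hu : DifferentiableOn ℂ u (Metric.ball 0 R \ {0}))
    (hE : IntegrableOn (fun z => ‖deriv u z‖ ^ 2) (Metric.ball 0 R \ {0})) :
    ∃ v : ℂ → ℂ, DifferentiableOn ℂ v (Metric.ball 0 R) ∧
      ∀ z ∈ Metric.ball (0:ℂ) R \ {0}, v z = u z := by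
  set S : Set ℂ := Metric.ball (0:ℂ) R \ {0} with hSdef
  have hSopen : IsOpen S := Metric.isOpen_ball.sdiff isClosed_singleton
  set f : ℂ → ℂ := deriv u with hfdef
  have hfd : DifferentiableOn ℂ f S := ((hu.analyticOnNhd hSopen).deriv).differentiableOn
  -- integrability on balls of radius ≤ R
  have hIball : ∀ t : ℝ, t ≤ R → IntegrableOn (fun z => ‖f z‖ ^ 2) (Metric.ball 0 t) := by
    intro t ht
    have h0 : IntegrableOn (fun z => ‖f z‖ ^ 2) (Metric.ball 0 t \ {0}) :=
      hE.mono_set (diff_subset_diff_left (Metric.ball_subset_ball ht))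
    refine h0.congr_set_ae ((MeasureTheory.diff_ae_eq_self (μ := volume) (s := Metric.ball (0:ℂ) t) (t := {0})).2
      (measure_mono_null Set.inter_subset_right (measure_singleton 0))).symm
  -- smallness of energy near 0
  have hsmall : ∀ ε : ℝ, 0 < ε → ∃ δ : ℝ, 0 < δ ∧ δ ≤ R ∧
      ∀ t : ℝ, 0 < t → t ≤ δ → ∫ z in Metric.ball (0:ℂ) t, ‖f z‖ ^ 2 < ε := by
    intro ε hε
    have hanti : Antitone (fun n : ℕ => Metric.ball (0:ℂ) (R / (n+1))) := by
      intro n m hnm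
      apply Metric.ball_subset_ball
      apply div_le_div_of_nonneg_left hR.le (by positivity)
      exact_mod_cast by omega
    have hint : (⋂ n : ℕ, Metric.ball (0:ℂ) (R / (n+1))) = {0} := by
      ext z
      simp only [Set.mem_iInter, Metric.mem_ball, Set.mem_singleton_iff, dist_zero_right]
      constructor
      · intro h
        by_contra hz
        have hz' : 0 < ‖z‖ := norm_pos_iff.2 hz
        obtain ⟨n, hn⟩ := exists_nat_gt (R / ‖z‖)
        have h2 : R / (n+1) < ‖z‖ := by
          rw [div_lt_iff₀ (by positivity)]
          rw [div_lt_iff₀ hz'] at hn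
          nlinarith [hz'.le]
        exact absurd (h n) (not_lt.2 h2.le)
      · intro h; subst h; intro n; simpa using by positivity
    have hseq := Antitone.tendsto_setIntegral (f := fun z => ‖f z‖ ^ 2)
      (fun n => measurableSet_ball) hanti
      ((hIball R le_rfl).mono_set (Metric.ball_subset_ball (by norm_num)))
    rw [hint] at hseq
    have hzero : ∫ z in ({0} : Set ℂ), ‖f z‖ ^ 2 = 0 := by
      rw [show (volume.restrict ({0} : Set ℂ)) = 0 from
        Measure.restrict_eq_zero.2 (measure_singleton 0), integral_zero_measure]
    rw [hzero] at hseq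
    have := (hseq.eventually (eventually_lt_nhds hε)).exists
    obtain ⟨n, hn⟩ := this
    refine ⟨R / (n+1), by positivity, ?_, ?_⟩
    · rw [div_le_iff₀ (by positivity)]
      nlinarith [hR.le]
    · intro t ht htδ
      calc ∫ z in Metric.ball (0:ℂ) t, ‖f z‖ ^ 2
          ≤ ∫ z in Metric.ball (0:ℂ) (R/(n+1)), ‖f z‖ ^ 2 := by
            apply setIntegral_mono_set (hIball _ ?_)
            · exact Filter.Eventually.of_forall (fun z => by positivity)
            · exact Filter.Eventually.of_forall (Metric.ball_subset_ball htδ)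
            · rw [div_le_iff₀ (by positivity)]
              nlinarith [hR.le]
        _ < ε := hn
  -- the derivative is o(1/z) at 0
  have ho : (fun z : ℂ => f z) =o[𝓝[≠] (0:ℂ)] fun z => z⁻¹ := by
    rw [Asymptotics.isLittleO_iff]
    intro ε hε
    obtain ⟨δ, hδ0, hδR, hδ⟩ := hsmall (π * ε ^ 2 / 16) (by positivity)
    have hmem : Metric.ball (0:ℂ) (min (2/3*δ) (R/2)) \ {0} ∈ 𝓝[≠] (0:ℂ) := by
      apply diff_mem_nhdsWithin_compl
      exact Metric.ball_mem_nhds _ (by positivity)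
    filter_upwards [hmem] with z hz
    obtain ⟨hz1, hz2⟩ := hz
    rw [Metric.mem_ball, dist_zero_right] at hz1
    have hzne : z ≠ 0 := hz2
    have hzpos : 0 < ‖z‖ := norm_pos_iff.2 hzne
    have hz3 : ‖z‖ < 2/3*δ := lt_of_lt_of_le hz1 (min_le_left _ _)
    have hz4 : ‖z‖ < R/2 := lt_of_lt_of_le hz1 (min_le_right _ _)
    -- apply submean on ball z (‖z‖/2)
    have hsub : Metric.ball z (‖z‖/2) ⊆ S := by
      intro w hw
      rw [Metric.mem_ball] at hw
      have h5 : ‖w - z‖ < ‖z‖/2 := by rwa [dist_eq_norm] at hw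
      constructor
      · rw [Metric.mem_ball, dist_zero_right]
        calc ‖w‖ = ‖z + (w - z)‖ := by ring_nf
          _ ≤ ‖z‖ + ‖w - z‖ := norm_add_le _ _
          _ < R := by nlinarith
      · simp only [Set.mem_singleton_iff]
        intro hw0
        rw [hw0] at h5
        simp only [zero_sub, norm_neg] at h5
        linarith
    have hsub2 : Metric.ball z (‖z‖/2) ⊆ Metric.ball (0:ℂ) (3/2*‖z‖) := by
      intro w hw
      rw [Metric.mem_ball] at hw ⊢
      rw [dist_eq_norm] at hw
      rw [dist_zero_right]
      calc ‖w‖ = ‖z + (w - z)‖ := by ring_nf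
        _ ≤ ‖z‖ + ‖w - z‖ := norm_add_le _ _
        _ < 3/2*‖z‖ := by linarith
    have harea := area_submean (f := f) (c := z) (r := ‖z‖/2) (s := ‖z‖/4)
      (by positivity) (by linarith) (hfd.mono hsub) ((hIball R le_rfl).mono_set
        (hsub.trans Set.diff_subset))
    have hcomp : ∫ w in Metric.ball z (‖z‖/2), ‖f w‖ ^ 2
        ≤ ∫ w in Metric.ball (0:ℂ) (3/2*‖z‖), ‖f w‖ ^ 2 := by
      apply setIntegral_mono_set (hIball (3/2*‖z‖) (by linarith))
      · exact Filter.Eventually.of_forall (fun w => by positivity)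
      · exact Filter.Eventually.of_forall hsub2
    have hEb : ∫ w in Metric.ball (0:ℂ) (3/2*‖z‖), ‖f w‖ ^ 2 < π * ε ^ 2 / 16 :=
      hδ _ (by positivity) (by linarith)
    -- conclude
    rw [norm_inv, ← div_eq_mul_inv, le_div_iff₀ hzpos]
    refine le_of_pow_le_pow_left₀ two_ne_zero hε.le ?_
    have hπ := Real.pi_pos
    have h16 : π * (‖z‖/4)^2 * ‖f z‖^2 < π * ε^2/16 := lt_of_le_of_lt (harea.trans hcomp) hEb
    nlinarith [h16, hπ, norm_nonneg (f z), hzpos, sq_nonneg (‖f z‖*‖z‖ - ε), sq_nonneg (‖f z‖*‖z‖ + ε)]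
  -- extend f := deriv u across 0
  have hg : DifferentiableOn ℂ (Function.update f 0 (limUnder (𝓝[≠] (0:ℂ)) f))
      (Metric.ball 0 R) := by
    apply Complex.differentiableOn_update_limUnder_of_isLittleO (Metric.ball_mem_nhds _ hR) hfd
    simp only [sub_zero]
    have hconst : (fun _ : ℂ => f 0) =o[𝓝[≠] (0:ℂ)] fun z => z⁻¹ := by
      rw [Asymptotics.isLittleO_const_left]
      right
      have h1 : Tendsto (fun z : ℂ => ‖z‖) (𝓝[≠] (0:ℂ)) (𝓝[>] 0) := by
        rw [tendsto_nhdsWithin_iff]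
        constructor
        · exact (continuous_norm.tendsto' 0 0 norm_zero).mono_left nhdsWithin_le_nhds
        · exact eventually_mem_nhdsWithin.mono (fun z hz => norm_pos_iff.2 hz)
      have h2 := tendsto_inv_nhdsGT_zero.comp h1
      refine h2.congr (fun z => ?_)
      simp [Function.comp]
    exact ho.sub hconst
  set g := Function.update f 0 (limUnder (𝓝[≠] (0:ℂ)) f) with hgdef
  have hgc : ContinuousAt g 0 := (hg.differentiableAt (Metric.ball_mem_nhds _ hR)).continuousAt
  set M : ℝ := ‖g 0‖ + 1 with hM
  have hM0 : 0 < M := by positivity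
  have hev : ∀ᶠ w in 𝓝 (0:ℂ), ‖g w‖ < M :=
    (hgc.norm).tendsto.eventually_lt_const (lt_add_one _)
  obtain ⟨δ₀, hδ₀pos, hδ₀⟩ := Metric.eventually_nhds_iff.1 hev
  set δ : ℝ := min (δ₀/2) (R/2) with hδdef
  have hδpos : 0 < δ := by positivity
  have hδR : δ < R := lt_of_le_of_lt (min_le_right _ _) (by linarith)
  have hfb : ∀ w : ℂ, w ≠ 0 → ‖w‖ < δ → ‖f w‖ ≤ M := by
    intro w hw hwδ
    have hgw : ‖g w‖ < M := by
      apply hδ₀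
      rw [dist_zero_right]
      calc ‖w‖ < δ := hwδ
        _ ≤ δ₀/2 := min_le_left _ _
        _ < δ₀ := by linarith
    rw [hgdef, Function.update_of_ne hw] at hgw
    exact hgw.le
  -- bound of u on the sphere of radius δ/2
  have hsubS : Metric.sphere (0:ℂ) (δ/2) ⊆ S := by
    intro x hx
    rw [mem_sphere, dist_zero_right] at hx
    constructor
    · rw [Metric.mem_ball, dist_zero_right, hx]; linarith
    · simp only [Set.mem_singleton_iff]
      intro h
      rw [h, norm_zero] at hx
      linarith
  obtain ⟨C₀, hC₀⟩ := (isCompact_sphere (0:ℂ) (δ/2)).exists_bound_of_continuousOn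
    (hu.continuousOn.mono hsubS)
  -- u is bounded on the punctured δ-ball
  have hub : ∀ z : ℂ, z ≠ 0 → ‖z‖ < δ → ‖u z‖ ≤ C₀ + M * (2*δ) := by
    intro z hz hzδ
    have hznorm : 0 < ‖z‖ := norm_pos_iff.2 hz
    set w : ℂ := ((δ/2 / ‖z‖ : ℝ) : ℂ) * z with hw
    have hwnorm : ‖w‖ = δ/2 := by
      rw [hw, norm_mul, Complex.norm_real, Real.norm_eq_abs, abs_of_pos (by positivity)]
      field_simp
    have hsegsub : segment ℝ z w ⊆ {x : ℂ | x ≠ 0 ∧ ‖x‖ < δ} := by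
      rintro x ⟨a, b, ha, hb, hab, rfl⟩
      have hx : a • z + b • w = ((a + b * (δ/2/‖z‖) : ℝ) : ℂ) * z := by
        rw [hw, Complex.real_smul, Complex.real_smul]
        push_cast
        ring
      have hnormx : ‖a • z + b • w‖ = a * ‖z‖ + b * (δ/2) := by
        rw [hx, norm_mul, Complex.norm_real, Real.norm_eq_abs,
          abs_of_nonneg (by positivity)]
        have habsne : ‖z‖ ≠ 0 := ne_of_gt hznorm
        field_simp
      have hmin : 0 < min ‖z‖ (δ/2) := lt_min hznorm (by positivity)
      have hlow : min ‖z‖ (δ/2) ≤ a * ‖z‖ + b * (δ/2) := by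
        have h1 : a * min ‖z‖ (δ/2) ≤ a * ‖z‖ :=
          mul_le_mul_of_nonneg_left (min_le_left _ _) ha
        have h2 : b * min ‖z‖ (δ/2) ≤ b * (δ/2) :=
          mul_le_mul_of_nonneg_left (min_le_right _ _) hb
        nlinarith
      have hhigh : a * ‖z‖ + b * (δ/2) < δ := by
        have h1 : a * ‖z‖ ≤ a * δ := mul_le_mul_of_nonneg_left hzδ.le ha
        have h2 : b * (δ/2) ≤ b * δ := mul_le_mul_of_nonneg_left (by linarith) hb
        rcases eq_or_lt_of_le ha with h0 | h0
        · have hb1 : b = 1 := by linarith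
          rw [← h0, hb1]; simp; linarith
        · nlinarith
      constructor
      · rw [← norm_pos_iff]
        linarith
      · linarith [hnormx]
    have hsegS : segment ℝ z w ⊆ S := by
      intro x hx
      obtain ⟨hx0, hxδ⟩ := hsegsub hx
      refine ⟨Metric.mem_ball.2 ?_, by simpa using hx0⟩
      rw [dist_zero_right]
      linarith
    have hmvt := Convex.norm_image_sub_le_of_norm_hasFDerivWithin_le
      (f := u) (𝕜 := ℂ)
      (f' := fun x => ContinuousLinearMap.smulRight (1 : ℂ →L[ℂ] ℂ) (f x))
      (s := segment ℝ z w) (C := M)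
      (fun x hx => (hasDerivAt_iff_hasFDerivAt.1
        (hu.differentiableAt (hSopen.mem_nhds (hsegS hx))).hasDerivAt).hasFDerivWithinAt)
      (fun x hx => by
        rw [ContinuousLinearMap.norm_smulRight_apply]
        simp only [norm_one, one_mul]
        exact hfb x (hsegsub hx).1 (hsegsub hx).2)
      (convex_segment z w) (right_mem_segment ℝ z w) (left_mem_segment ℝ z w)
    have hC₀w : ‖u w‖ ≤ C₀ := hC₀ w (by rw [mem_sphere, dist_zero_right]; exact hwnorm)
    have hzw : ‖z - w‖ ≤ 2*δ := by
      calc ‖z - w‖ ≤ ‖z‖ + ‖w‖ := norm_sub_le _ _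
        _ ≤ 2*δ := by rw [hwnorm]; linarith
    calc ‖u z‖ = ‖u w + (u z - u w)‖ := by ring_nf
      _ ≤ ‖u w‖ + ‖u z - u w‖ := norm_add_le _ _
      _ ≤ C₀ + M * ‖z - w‖ := add_le_add hC₀w hmvt
      _ ≤ C₀ + M * (2*δ) := by nlinarith
  -- final assembly
  have hbdd : BddAbove (norm ∘ u '' (Metric.ball (0:ℂ) δ \ {0})) := by
    refine ⟨C₀ + M * (2*δ), ?_⟩
    rintro x ⟨z, hz, rfl⟩
    exact hub z (by simpa using hz.2)
      (by have := hz.1; rwa [Metric.mem_ball, dist_zero_right] at this)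
  have hv0 : DifferentiableOn ℂ (Function.update u 0 (limUnder (𝓝[≠] (0:ℂ)) u))
      (Metric.ball 0 δ) :=
    Complex.differentiableOn_update_limUnder_of_bddAbove (Metric.ball_mem_nhds _ hδpos)
      (hu.mono (diff_subset_diff_left (Metric.ball_subset_ball hδR.le))) hbdd
  refine ⟨Function.update u 0 (limUnder (𝓝[≠] (0:ℂ)) u), ?_, ?_⟩
  · intro z hz
    by_cases hz0 : z = 0
    · subst hz0
      exact (hv0.differentiableAt (Metric.ball_mem_nhds _ hδpos)).differentiableWithinAt
    · have h1 : DifferentiableAt ℂ u z := hu.differentiableAt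
        (hSopen.mem_nhds ⟨hz, by simpa using hz0⟩)
      have h2 : Function.update u 0 (limUnder (𝓝[≠] (0:ℂ)) u) =ᶠ[𝓝 z] u := by
        filter_upwards [isOpen_compl_singleton.mem_nhds
          (by simpa using hz0 : z ∈ ({0}ᶜ : Set ℂ))] with x hx
        exact Function.update_of_ne hx _ _
      exact (h2.differentiableAt_iff.2 h1).differentiableWithinAt
  · intro z hz
    exact Function.update_of_ne (by simpa using hz.2) _ _
end
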